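/- arXiv:0804.0686 — 2 statements merged into one kernel-verified Lean document; each statement's English description precedes it below -/
import Mathlib

section
/- Under any adaptive strategy P⃗ⁿ for discriminating channels W and W̄ on finite alphabets, for every s ∈ ℝ the cumulant generating function satisfies the chain rule φ(s | Q_{W,P⃗ⁿ} ‖ Q_{W̄,P⃗ⁿ}) = φ(s | Q_{W,P⃗^{n-1}} ‖ Q_{W̄,P⃗^{n-1}}) + φ(s | W ‖ W̄ | P_{s,W|W̄,P⃗ⁿ}), where P_{s,W|W̄,P⃗ⁿ} is the distribution of the n-th input under the tilted distribution Q_{s,W|W̄,P⃗^{n-1}}, and consequently φ(s | Q_{W,P⃗ⁿ} ‖ Q_{W̄,P⃗ⁿ}) ≤ n · sup_{x∈X} φ(s | W_x ‖ W̄_x) for all s ≤ 0. -/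
open Filter

/-- `W` is a (classical) channel from `X` to `Y` with full-support outputs. -/
def IsChannel {X Y : Type*} [Fintype Y] (W : X → Y → ℝ) : Prop :=
  ∀ x, (∀ y, 0 < W x y) ∧ ∑ y, W x y = 1

/-- An adaptive strategy: for each step `k`, a conditional distribution of the
`(k+1)`-st input given the first `k` input-output pairs. -/
def IsStrategy {X Y : Type*} [Fintype X]
    (strat : (k : ℕ) → (Fin k → X × Y) → X → ℝ) : Prop :=
  ∀ k h, (∀ x, 0 ≤ strat k h x) ∧ ∑ x, strat k h x = 1

/-- Joint distribution of `n` adaptive input-output pairs under channel `W`. -/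
noncomputable def Qdist {X Y : Type*} [Fintype X] [Fintype Y] (W : X → Y → ℝ)
    (strat : (k : ℕ) → (Fin k → X × Y) → X → ℝ) (n : ℕ) (h : Fin n → X × Y) : ℝ :=
  ∏ k : Fin n,
    strat k.1 (fun j : Fin k.1 => h ⟨j.1, j.2.trans k.2⟩) (h k).1 * W (h k).1 (h k).2

/-- Marginal distribution of the `(k+1)`-st input under channel `W`. -/
noncomputable def inMarg {X Y : Type*} [Fintype X] [Fintype Y] (W : X → Y → ℝ)
    (strat : (k : ℕ) → (Fin k → X × Y) → X → ℝ) (k : ℕ) (x : X) : ℝ :=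
  ∑ h : Fin k → X × Y, Qdist W strat k h * strat k h x

/-- Kullback–Leibler divergence of finitely supported distributions. -/
noncomputable def Dkl {α : Type*} [Fintype α] (P Q : α → ℝ) : ℝ :=
  ∑ a, P a * Real.log (P a / Q a)

/-- `φ(s|P‖Q) = log ∑ Q^s P^{1-s}`. -/
noncomputable def phiRel {α : Type*} [Fintype α] (s : ℝ) (P Q : α → ℝ) : ℝ :=
  Real.log (∑ a, Q a ^ s * P a ^ (1 - s))

/-- Density of the tilted distribution of the first `n` pairs. -/
noncomputable def Qtilt {X Y : Type*} [Fintype X] [Fintype Y] (s : ℝ) (W Wb : X → Y → ℝ)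
    (strat : (k : ℕ) → (Fin k → X × Y) → X → ℝ) (n : ℕ) (h : Fin n → X × Y) : ℝ :=
  Qdist Wb strat n h ^ s * Qdist W strat n h ^ (1 - s) /
    ∑ g : Fin n → X × Y, Qdist Wb strat n g ^ s * Qdist W strat n g ^ (1 - s)

/-- Distribution of the `(k+1)`-st input under the tilted distribution. -/
noncomputable def Ptilt {X Y : Type*} [Fintype X] [Fintype Y] (s : ℝ) (W Wb : X → Y → ℝ)
    (strat : (k : ℕ) → (Fin k → X × Y) → X → ℝ) (k : ℕ) (x : X) : ℝ :=
  ∑ h : Fin k → X × Y, Qtilt s W Wb strat k h * strat k h x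

/-- `φ(s|W‖W̄|P) = log ∑_x P(x) ∑_y W̄_x(y)^s W_x(y)^{1-s}`. -/
noncomputable def phiChan {X Y : Type*} [Fintype X] [Fintype Y] (s : ℝ)
    (W Wb : X → Y → ℝ) (P : X → ℝ) : ℝ :=
  Real.log (∑ x, P x * ∑ y, Wb x y ^ s * W x y ^ (1 - s))

section Aux

lemma rpow_mul_rpow_one_sub {a : ℝ} (ha : 0 ≤ a) (s : ℝ) : a ^ s * a ^ (1 - s) = a := by
  rcases ha.eq_or_lt with h | h
  · rcases eq_or_ne s 0 with hs | hs <;> simp [← h, Real.zero_rpow, hs]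
  · rw [← Real.rpow_add h]; simp

variable {X Y : Type*} [Fintype X] [Fintype Y]

lemma Qdist_nonneg {W : X → Y → ℝ} (hW : IsChannel W)
    {strat : (k : ℕ) → (Fin k → X × Y) → X → ℝ} (hstrat : IsStrategy strat)
    (n : ℕ) (h : Fin n → X × Y) : 0 ≤ Qdist W strat n h :=
  Finset.prod_nonneg fun k _ => mul_nonneg ((hstrat _ _).1 _) ((hW _).1 _).le

lemma Qdist_snoc (W : X → Y → ℝ) (strat : (k : ℕ) → (Fin k → X × Y) → X → ℝ)
    (n : ℕ) (g : Fin n → X × Y) (p : X × Y) :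
    Qdist W strat (n + 1) (Fin.snoc g p) =
      Qdist W strat n g * (strat n g p.1 * W p.1 p.2) := by
  have key : ∀ (j : Fin (n + 1)) (hj : j.1 < n),
      (Fin.snoc g p : Fin (n + 1) → X × Y) j = g ⟨j.1, hj⟩ := by
    intro j hj
    conv_lhs => rw [show j = Fin.castSucc ⟨j.1, hj⟩ from Fin.ext rfl]
    rw [Fin.snoc_castSucc]
  unfold Qdist
  rw [Fin.prod_univ_castSucc]
  congr 1
  · refine Finset.prod_congr rfl fun k _ => ?_
    rw [key (Fin.castSucc k) k.2]
    have hFG : (fun j : Fin k.1 => (Fin.snoc g p : Fin (n + 1) → X × Y)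
          ⟨j.1, Nat.lt_succ_of_lt (j.2.trans k.2)⟩) =
        (fun j : Fin k.1 => g ⟨j.1, j.2.trans k.2⟩) :=
      funext fun j => key _ (j.2.trans k.2)
    exact congrArg (fun F => strat k.1 F (g ⟨k.1, k.2⟩).1 *
      W (g ⟨k.1, k.2⟩).1 (g ⟨k.1, k.2⟩).2) hFG
  · rw [Fin.snoc_last]
    have hFG : (fun j : Fin n => (Fin.snoc g p : Fin (n + 1) → X × Y)
          ⟨j.1, Nat.lt_succ_of_lt j.2⟩) = g :=
      funext fun j => key _ j.2
    exact congrArg (fun F => strat n F p.1 * W p.1 p.2) hFG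

end Aux
section Aux2

variable {X Y : Type*} [Fintype X] [Fintype Y]

/-- Equivalence `(Fin n → Z) × Z ≃ (Fin (n+1) → Z)` via `snoc`. -/
def snocEquiv (n : ℕ) (Z : Type*) : (Fin n → Z) × Z ≃ (Fin (n + 1) → Z) where
  toFun gp := Fin.snoc gp.1 gp.2
  invFun h := (Fin.init h, h (Fin.last n))
  left_inv := fun ⟨g, p⟩ => by simp
  right_inv := fun h => by simp

lemma sum_snoc {Z : Type*} [Fintype Z] (n : ℕ) (f : (Fin (n + 1) → Z) → ℝ) :
    ∑ h, f h = ∑ g : Fin n → Z, ∑ p : Z, f (Fin.snoc g p) := by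
  rw [← Equiv.sum_comp (snocEquiv n Z) f, Fintype.sum_prod_type]
  rfl

lemma exists_pos {W Wb : X → Y → ℝ} (hW : IsChannel W) (hWb : IsChannel Wb)
    {strat : (k : ℕ) → (Fin k → X × Y) → X → ℝ} (hstrat : IsStrategy strat)
    [Nonempty Y] (n : ℕ) :
    ∃ h, 0 < Qdist W strat n h ∧ 0 < Qdist Wb strat n h := by
  induction n with
  | zero => exact ⟨Fin.elim0, by simp [Qdist], by simp [Qdist]⟩
  | succ n ih =>
    obtain ⟨g, hg, hgb⟩ := ih
    have hx : ∃ x, 0 < strat n g x := by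
      by_contra hc
      push_neg at hc
      have : ∀ x ∈ Finset.univ, strat n g x = 0 :=
        fun x _ => le_antisymm (hc x) ((hstrat n g).1 x)
      have := (hstrat n g).2
      rw [Finset.sum_eq_zero ‹∀ x ∈ Finset.univ, strat n g x = 0›] at this
      norm_num at this
    obtain ⟨x, hxpos⟩ := hx
    obtain ⟨y⟩ := ‹Nonempty Y›
    refine ⟨Fin.snoc g (x, y), ?_, ?_⟩
    · rw [Qdist_snoc]
      exact mul_pos hg (mul_pos hxpos ((hW x).1 y))
    · rw [Qdist_snoc]
      exact mul_pos hgb (mul_pos hxpos ((hWb x).1 y))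

lemma nonemptyY {W : X → Y → ℝ} [Nonempty X] (hW : IsChannel W) : Nonempty Y := by
  by_contra hc
  have := (hW (Classical.arbitrary X)).2
  rw [not_nonempty_iff] at hc
  simp [Finset.univ_eq_empty] at this

end Aux2
section Aux3

variable {X Y : Type*} [Fintype X] [Fintype Y]

noncomputable def cSum (s : ℝ) (W Wb : X → Y → ℝ) (x : X) : ℝ :=
  ∑ y, Wb x y ^ s * W x y ^ (1 - s)

noncomputable def Tfun (s : ℝ) (W Wb : X → Y → ℝ)
    (strat : (k : ℕ) → (Fin k → X × Y) → X → ℝ) (n : ℕ) : ℝ :=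
  ∑ h : Fin n → X × Y, Qdist Wb strat n h ^ s * Qdist W strat n h ^ (1 - s)

lemma T_zero (s : ℝ) (W Wb : X → Y → ℝ)
    (strat : (k : ℕ) → (Fin k → X × Y) → X → ℝ) : Tfun s W Wb strat 0 = 1 := by
  simp [Tfun, Qdist]

lemma T_pos {W Wb : X → Y → ℝ} (hW : IsChannel W) (hWb : IsChannel Wb)
    {strat : (k : ℕ) → (Fin k → X × Y) → X → ℝ} (hstrat : IsStrategy strat)
    [Nonempty Y] (s : ℝ) (n : ℕ) : 0 < Tfun s W Wb strat n := by
  obtain ⟨h, hpos, hbpos⟩ := exists_pos hW hWb hstrat n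
  refine Finset.sum_pos' (fun g _ => mul_nonneg (Real.rpow_nonneg (Qdist_nonneg hWb hstrat n g) s)
    (Real.rpow_nonneg (Qdist_nonneg hW hstrat n g) (1 - s))) ⟨h, Finset.mem_univ h, ?_⟩
  exact mul_pos (Real.rpow_pos_of_pos hbpos s) (Real.rpow_pos_of_pos hpos (1 - s))

lemma T_succ {W Wb : X → Y → ℝ} (hW : IsChannel W) (hWb : IsChannel Wb)
    {strat : (k : ℕ) → (Fin k → X × Y) → X → ℝ} (hstrat : IsStrategy strat)
    (s : ℝ) (n : ℕ) :
    Tfun s W Wb strat (n + 1) = ∑ g : Fin n → X × Y,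
      Qdist Wb strat n g ^ s * Qdist W strat n g ^ (1 - s) *
        ∑ x, strat n g x * cSum s W Wb x := by
  unfold Tfun
  rw [sum_snoc]
  refine Finset.sum_congr rfl fun g _ => ?_
  rw [Fintype.sum_prod_type, Finset.mul_sum]
  refine Finset.sum_congr rfl fun x _ => ?_
  rw [cSum, Finset.mul_sum, Finset.mul_sum]
  refine Finset.sum_congr rfl fun y _ => ?_
  rw [Qdist_snoc, Qdist_snoc]
  have hQ := Qdist_nonneg hW hstrat n g
  have hQb := Qdist_nonneg hWb hstrat n g
  have hst := (hstrat n g).1 x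
  rw [Real.mul_rpow hQb (mul_nonneg hst ((hWb x).1 y).le),
      Real.mul_rpow hst ((hWb x).1 y).le,
      Real.mul_rpow hQ (mul_nonneg hst ((hW x).1 y).le),
      Real.mul_rpow hst ((hW x).1 y).le]
  have key : Qdist Wb strat n g ^ s * (strat n g x ^ s * Wb x y ^ s) *
      (Qdist W strat n g ^ (1 - s) * (strat n g x ^ (1 - s) * W x y ^ (1 - s))) =
      Qdist Wb strat n g ^ s * Qdist W strat n g ^ (1 - s) *
        ((strat n g x ^ s * strat n g x ^ (1 - s)) * (Wb x y ^ s * W x y ^ (1 - s))) := by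
    ring
  rw [key, rpow_mul_rpow_one_sub hst]

lemma ratio (s : ℝ) (W Wb : X → Y → ℝ) (hW : IsChannel W) (hWb : IsChannel Wb)
    {strat : (k : ℕ) → (Fin k → X × Y) → X → ℝ} (hstrat : IsStrategy strat) (n : ℕ) :
    ∑ x, Ptilt s W Wb strat n x * cSum s W Wb x =
      Tfun s W Wb strat (n + 1) / Tfun s W Wb strat n := by
  rw [T_succ hW hWb hstrat]
  unfold Ptilt Qtilt
  simp only [Finset.sum_mul]
  rw [Finset.sum_comm]
  conv_rhs => rw [Finset.sum_div]
  refine Finset.sum_congr rfl fun g _ => ?_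
  conv_rhs => rw [Finset.mul_sum, Finset.sum_div]
  refine Finset.sum_congr rfl fun x _ => ?_
  show _ = _ * _ / Tfun s W Wb strat n
  unfold Tfun
  ring

end Aux3
section Aux4

variable {X Y : Type*} [Fintype X] [Fintype Y]

lemma sum_Ptilt (s : ℝ) (W Wb : X → Y → ℝ)
    {strat : (k : ℕ) → (Fin k → X × Y) → X → ℝ} (hstrat : IsStrategy strat) (n : ℕ) :
    ∑ x, Ptilt s W Wb strat n x = Tfun s W Wb strat n / Tfun s W Wb strat n := by
  unfold Ptilt Qtilt Tfun
  rw [Finset.sum_comm, Finset.sum_div]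
  refine Finset.sum_congr rfl fun g _ => ?_
  rw [← Finset.mul_sum, (hstrat n g).2, mul_one]

end Aux4

theorem stmt9 {X Y : Type*} [Fintype X] [Fintype Y] [Nonempty X]
    (W Wb : X → Y → ℝ) (hW : IsChannel W) (hWb : IsChannel Wb)
    (strat : (k : ℕ) → (Fin k → X × Y) → X → ℝ) (hstrat : IsStrategy strat) :
    (∀ s : ℝ, ∀ n : ℕ,
      phiRel s (Qdist W strat (n + 1)) (Qdist Wb strat (n + 1)) =
        phiRel s (Qdist W strat n) (Qdist Wb strat n) +
          phiChan s W Wb (Ptilt s W Wb strat n)) ∧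
    (∀ s : ℝ, s ≤ 0 → ∀ n : ℕ,
      phiRel s (Qdist W strat n) (Qdist Wb strat n) ≤
        n * ⨆ x, phiRel s (W x) (Wb x)) := by
  haveI : Nonempty Y := nonemptyY hW
  have chain : ∀ s : ℝ, ∀ n : ℕ,
      phiRel s (Qdist W strat (n + 1)) (Qdist Wb strat (n + 1)) =
        phiRel s (Qdist W strat n) (Qdist Wb strat n) +
          phiChan s W Wb (Ptilt s W Wb strat n) := by
    intro s n
    have h1 := ratio s W Wb hW hWb hstrat n
    have h2 : phiChan s W Wb (Ptilt s W Wb strat n) =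
        Real.log (Tfun s W Wb strat (n + 1) / Tfun s W Wb strat n) :=
      congrArg Real.log h1
    show Real.log (Tfun s W Wb strat (n + 1)) =
      Real.log (Tfun s W Wb strat n) + phiChan s W Wb (Ptilt s W Wb strat n)
    rw [h2, Real.log_div (T_pos hW hWb hstrat s (n + 1)).ne'
      (T_pos hW hWb hstrat s n).ne']
    ring
  refine ⟨chain, fun s _ n => ?_⟩
  induction n with
  | zero =>
    have h0 : phiRel s (Qdist W strat 0) (Qdist Wb strat 0) =
        Real.log (Tfun s W Wb strat 0) := rfl
    rw [h0, T_zero]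
    simp
  | succ n ih =>
    rw [chain s n]
    have hc_pos : ∀ x, 0 < cSum s W Wb x := fun x =>
      Finset.sum_pos (fun y _ => mul_pos (Real.rpow_pos_of_pos ((hWb x).1 y) s)
        (Real.rpow_pos_of_pos ((hW x).1 y) (1 - s))) Finset.univ_nonempty
    set M := ⨆ x, phiRel s (W x) (Wb x) with hM
    have hcM : ∀ x, cSum s W Wb x ≤ Real.exp M := by
      intro x
      have h1 : Real.log (cSum s W Wb x) ≤ M :=
        le_ciSup (Set.Finite.bddAbove (Set.finite_range fun x => phiRel s (W x) (Wb x))) x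
      calc cSum s W Wb x = Real.exp (Real.log (cSum s W Wb x)) :=
            (Real.exp_log (hc_pos x)).symm
        _ ≤ Real.exp M := Real.exp_le_exp.mpr h1
    have hPn : ∀ x, 0 ≤ Ptilt s W Wb strat n x := fun x =>
      Finset.sum_nonneg fun h _ => mul_nonneg (div_nonneg
        (mul_nonneg (Real.rpow_nonneg (Qdist_nonneg hWb hstrat n h) s)
          (Real.rpow_nonneg (Qdist_nonneg hW hstrat n h) (1 - s)))
        (T_pos hW hWb hstrat s n).le) ((hstrat n h).1 x)
    have hsum_le : ∑ x, Ptilt s W Wb strat n x * cSum s W Wb x ≤ Real.exp M := by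
      calc ∑ x, Ptilt s W Wb strat n x * cSum s W Wb x
          ≤ ∑ x, Ptilt s W Wb strat n x * Real.exp M :=
            Finset.sum_le_sum fun x _ => mul_le_mul_of_nonneg_left (hcM x) (hPn x)
        _ = (∑ x, Ptilt s W Wb strat n x) * Real.exp M := (Finset.sum_mul _ _ _).symm
        _ = 1 * Real.exp M := by
            rw [sum_Ptilt s W Wb hstrat n, div_self (T_pos hW hWb hstrat s n).ne']
        _ = Real.exp M := one_mul _
    have hpos : 0 < ∑ x, Ptilt s W Wb strat n x * cSum s W Wb x := by
      rw [ratio s W Wb hW hWb hstrat n]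
      exact div_pos (T_pos hW hWb hstrat s (n + 1)) (T_pos hW hWb hstrat s n)
    have hphi : phiChan s W Wb (Ptilt s W Wb strat n) ≤ M := by
      have heq : phiChan s W Wb (Ptilt s W Wb strat n) =
          Real.log (∑ x, Ptilt s W Wb strat n x * cSum s W Wb x) := rfl
      rw [heq]
      exact (Real.log_le_iff_le_exp hpos).mpr hsum_le
    calc phiRel s (Qdist W strat n) (Qdist Wb strat n) +
          phiChan s W Wb (Ptilt s W Wb strat n) ≤ n * M + M := add_le_add ih hphi
      _ = ((n : ℕ) + 1 : ℕ) * M := by push_cast; ring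
end

section
/- (Strong converse for adaptive discrimination) Suppose lim_{ε→0+} φ(−ε|W‖W̄)/ε = sup_x D(W_x‖W̄_x), where φ(s|W‖W̄) = sup_x φ(s|W_x‖W̄_x). If a sequence (P⃗ⁿ, f_n) satisfies liminf_{n→∞} (−1/n) log E_{Q_{W̄,P⃗ⁿ}}[1−f_n] > sup_x D(W_x‖W̄_x), then E_{Q_{W,P⃗ⁿ}}[1−f_n] → 0. -/
open Filter

section AuxSC

variable {X Y : Type*} [Fintype X] [Fintype Y]

/-- extend a history by one pair -/
def ext1 {Z : Type*} (n : ℕ) (h : Fin n → Z) (z : Z) : Fin (n + 1) → Z :=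
  fun i => if hi : i.1 < n then h ⟨i.1, hi⟩ else z

def extEquiv (Z : Type*) (n : ℕ) : ((Fin n → Z) × Z) ≃ (Fin (n + 1) → Z) where
  toFun p := ext1 n p.1 p.2
  invFun H := (fun i => H ⟨i.1, i.2.trans (Nat.lt_succ_self n)⟩, H ⟨n, Nat.lt_succ_self n⟩)
  left_inv p := by
    ext i
    · simp only [ext1]; rw [dif_pos i.2]
    · simp only [ext1]; rw [dif_neg (lt_irrefl n)]
  right_inv H := by
    funext i
    by_cases hi : i.1 < n
    · simp only [ext1]; rw [dif_pos hi]
    · simp only [ext1]; rw [dif_neg hi]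
      congr 1
      exact Fin.ext (Nat.le_antisymm (Nat.lt_succ_iff.1 i.2) (not_lt.1 hi)).symm

variable {V W Wb : X → Y → ℝ} {strat : (k : ℕ) → (Fin k → X × Y) → X → ℝ}

lemma Qdist_nonneg_s14 (hs : ∀ k h x, 0 ≤ strat k h x) (hV : ∀ x y, 0 ≤ V x y)
    (n : ℕ) (h : Fin n → X × Y) : 0 ≤ Qdist V strat n h :=
  Finset.prod_nonneg fun k _ => mul_nonneg (hs _ _ _) (hV _ _)

lemma Qdist_ext1 (n : ℕ) (h : Fin n → X × Y) (z : X × Y) :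
    Qdist V strat (n + 1) (ext1 n h z) =
      Qdist V strat n h * (strat n h z.1 * V z.1 z.2) := by
  unfold Qdist
  rw [Fin.prod_univ_castSucc]
  congr 1
  · refine Finset.prod_congr rfl fun k _ => ?_
    have hist : (fun j : Fin (Fin.castSucc k).1 =>
        ext1 n h z ⟨j.1, j.2.trans (Fin.castSucc k).2⟩) =
        (fun j : Fin k.1 => h ⟨j.1, j.2.trans k.2⟩) := by
      funext j
      simp only [ext1]
      rw [dif_pos (j.2.trans k.2)]
    have hval : ext1 n h z (Fin.castSucc k) = h k := by
      simp only [ext1]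
      rw [dif_pos (show ((Fin.castSucc k : Fin (n+1)) : ℕ) < n from k.2)]
      exact congrArg h (Fin.ext rfl)
    rw [hval]
    exact congrArg (fun F => strat k.1 F (h k).1 * V (h k).1 (h k).2) hist
  · have hist : (fun j : Fin (Fin.last n).1 =>
        ext1 n h z ⟨j.1, j.2.trans (Fin.last n).2⟩) = h := by
      funext j
      simp only [ext1]
      rw [dif_pos (show (j : ℕ) < n from j.2)]
      exact congrArg h (Fin.ext rfl)
    have hval : ext1 n h z (Fin.last n) = z := by
      simp only [ext1]
      rw [dif_neg (show ¬(((Fin.last n : Fin (n+1)) : ℕ) < n) from lt_irrefl n)]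
    rw [hval]
    exact congrArg (fun F => strat n F z.1 * V z.1 z.2) hist

lemma sum_Qdist_le (hV : ∀ x y, 0 ≤ V x y) (hs : IsStrategy strat)
    {M : ℝ} (hM : 0 ≤ M) (hrow : ∀ x, ∑ y, V x y ≤ M) :
    ∀ n, ∑ h : Fin n → X × Y, Qdist V strat n h ≤ M ^ n := by
  intro n
  induction n with
  | zero =>
    have : ∀ h : Fin 0 → X × Y, Qdist V strat 0 h = 1 := fun h => Finset.prod_of_isEmpty _
    simp [this]
  | succ n ih =>
    rw [← Equiv.sum_comp (extEquiv (X × Y) n) (Qdist V strat (n + 1)), Fintype.sum_prod_type]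
    have hinner : ∀ h : Fin n → X × Y,
        ∑ z : X × Y, (strat n h z.1 * V z.1 z.2) ≤ M := by
      intro h
      rw [Fintype.sum_prod_type]
      calc ∑ x, ∑ y, strat n h x * V x y = ∑ x, strat n h x * ∑ y, V x y := by
            simp [Finset.mul_sum]
        _ ≤ ∑ x, strat n h x * M := by
            refine Finset.sum_le_sum fun x _ => ?_
            exact mul_le_mul_of_nonneg_left (hrow x) ((hs n h).1 x)
        _ = M := by rw [← Finset.sum_mul, (hs n h).2, one_mul]
    calc ∑ h : Fin n → X × Y, ∑ z : X × Y, Qdist V strat (n + 1) (extEquiv (X × Y) n (h, z))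
        = ∑ h : Fin n → X × Y, Qdist V strat n h * ∑ z : X × Y, (strat n h z.1 * V z.1 z.2) := by
          refine Finset.sum_congr rfl fun h _ => ?_
          rw [Finset.mul_sum]
          exact Finset.sum_congr rfl fun z _ => Qdist_ext1 n h z
      _ ≤ ∑ h : Fin n → X × Y, Qdist V strat n h * M := by
          refine Finset.sum_le_sum fun h _ => ?_
          exact mul_le_mul_of_nonneg_left (hinner h)
            (Qdist_nonneg_s14 (fun k h x => (hs k h).1 x) hV n h)
      _ = (∑ h : Fin n → X × Y, Qdist V strat n h) * M := by rw [Finset.sum_mul]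
      _ ≤ M ^ n * M := mul_le_mul_of_nonneg_right ih hM
      _ = M ^ (n + 1) := (pow_succ M n).symm

lemma Qdist_pos (hs : ∀ k h x, 0 ≤ strat k h x) (hWpos : ∀ x y, 0 < W x y)
    {n : ℕ} {h : Fin n → X × Y} (hb : 0 < Qdist Wb strat n h) :
    0 < Qdist W strat n h := by
  refine Finset.prod_pos fun k _ => ?_
  have hk := Finset.prod_ne_zero_iff.1 (ne_of_gt hb) k (Finset.mem_univ k)
  have hsk := (mul_ne_zero_iff.1 hk).1
  exact mul_pos (lt_of_le_of_ne (hs _ _ _) (Ne.symm hsk)) (hWpos _ _)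

lemma Qdist_eq_zero (hWbpos : ∀ x y, 0 < Wb x y)
    {n : ℕ} {h : Fin n → X × Y} (hb : Qdist Wb strat n h = 0) :
    Qdist W strat n h = 0 := by
  obtain ⟨k, hk, hk0⟩ := Finset.prod_eq_zero_iff.1 hb
  refine Finset.prod_eq_zero hk ?_
  have hsk : strat k.1 (fun j : Fin k.1 => h ⟨j.1, j.2.trans k.2⟩) (h k).1 = 0 := by
    rcases mul_eq_zero.1 hk0 with h' | h'
    · exact h'
    · exact absurd h' (ne_of_gt (hWbpos _ _))
  rw [hsk, zero_mul]

lemma Qdist_rpow (hs : ∀ k h x, 0 ≤ strat k h x)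
    (hWpos : ∀ x y, 0 < W x y) (hWbpos : ∀ x y, 0 < Wb x y) {ε : ℝ} (hε : 0 < ε)
    (n : ℕ) (h : Fin n → X × Y) :
    Qdist W strat n h ^ (1 + ε) * Qdist Wb strat n h ^ (-ε) =
      Qdist (fun x y => Wb x y ^ (-ε) * W x y ^ (1 + ε)) strat n h := by
  unfold Qdist
  rw [← Real.finset_prod_rpow _ _ (fun k _ => mul_nonneg (hs _ _ _) (hWpos _ _).le) (1 + ε),
    ← Real.finset_prod_rpow _ _ (fun k _ => mul_nonneg (hs _ _ _) (hWbpos _ _).le) (-ε),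
    ← Finset.prod_mul_distrib]
  refine Finset.prod_congr rfl fun k _ => ?_
  set a := strat k.1 (fun j : Fin k.1 => h ⟨j.1, j.2.trans k.2⟩) (h k).1 with ha
  set b := W (h k).1 (h k).2
  set c := Wb (h k).1 (h k).2
  have hb : 0 < b := hWpos _ _
  have hc : 0 < c := hWbpos _ _
  rcases eq_or_lt_of_le (hs k.1 _ (h k).1) with ha0 | ha0
  · rw [← ha] at ha0
    rw [← ha0, zero_mul, zero_mul, Real.zero_rpow (by positivity : (0:ℝ) < 1 + ε).ne',
      Real.zero_rpow (neg_ne_zero.2 hε.ne')]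
    simp
  · rw [Real.mul_rpow ha0.le hb.le, Real.mul_rpow ha0.le hc.le, mul_mul_mul_comm,
      ← Real.rpow_add ha0]
    have : (1:ℝ) + ε + -ε = 1 := by ring
    rw [this, Real.rpow_one]
    ring

end AuxSC

lemma uv_eq {ε a b c g : ℝ} (hε : 0 < ε) (ha : 0 < a) (hb : 0 < b) (hg : 0 < g)
    (hc : a ^ (1 + ε) * b ^ (-ε) = c) :
    a * g = (b * g) ^ (ε / (1 + ε)) * (c * g) ^ (1 / (1 + ε)) := by
  have h1 : (0:ℝ) < 1 + ε := by linarith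
  have hcpos : 0 < c := by rw [← hc]; positivity
  rw [Real.rpow_def_of_pos (mul_pos hb hg), Real.rpow_def_of_pos (mul_pos hcpos hg),
    ← Real.exp_add, ← Real.exp_log (mul_pos ha hg)]
  congr 1
  rw [Real.log_mul ha.ne' hg.ne', Real.log_mul hb.ne' hg.ne', Real.log_mul hcpos.ne' hg.ne',
    ← hc, Real.log_mul (Real.rpow_pos_of_pos ha _).ne' (Real.rpow_pos_of_pos hb _).ne',
    Real.log_rpow ha, Real.log_rpow hb]
  field_simp
  ring


theorem stmt14 {X Y : Type*} [Fintype X] [Fintype Y] [Nonempty X]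
    (W Wb : X → Y → ℝ) (hW : IsChannel W) (hWb : IsChannel Wb)
    (hphi : Tendsto
      (fun ε : ℝ => (⨆ x, phiRel (-ε) (W x) (Wb x)) / ε)
      (nhdsWithin 0 (Set.Ioi 0)) (nhds (⨆ x, Dkl (W x) (Wb x))))
    (strats : ℕ → (k : ℕ) → (Fin k → X × Y) → X → ℝ)
    (hstrats : ∀ n, IsStrategy (strats n))
    (f : (n : ℕ) → (Fin n → X × Y) → ℝ)
    (hf : ∀ n h, f n h ∈ Set.Icc (0 : ℝ) 1)
    (hrate : (⨆ x, Dkl (W x) (Wb x)) <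
      Filter.liminf (fun n : ℕ => (-1 / (n : ℝ)) *
        Real.log (∑ h : Fin n → X × Y, Qdist Wb (strats n) n h * (1 - f n h)))
        atTop) :
    Tendsto
      (fun n => ∑ h : Fin n → X × Y, Qdist W (strats n) n h * (1 - f n h))
      atTop (nhds 0) := by
  classical
  have hY : Nonempty Y := by
    rcases isEmpty_or_nonempty Y with hE | hN
    · exfalso
      have h2 := (hW (Classical.arbitrary X)).2
      rw [Finset.univ_eq_empty, Finset.sum_empty] at h2
      norm_num at h2
    · exact hN
  have hWpos : ∀ x y, 0 < W x y := fun x y => (hW x).1 y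
  have hWbpos : ∀ x y, 0 < Wb x y := fun x y => (hWb x).1 y
  have hsnn : ∀ n k h x, 0 ≤ strats n k h x := fun n k h x => ((hstrats n) k h).1 x
  have hg0 : ∀ n h, 0 ≤ 1 - f n h := fun n h => by linarith [(hf n h).2]
  have hg1 : ∀ n h, 1 - f n h ≤ 1 := fun n h => by linarith [(hf n h).1]
  obtain ⟨R, hDR, hRlt⟩ := exists_between hrate
  -- choose ε
  have hev : ∀ᶠ ε in nhdsWithin (0:ℝ) (Set.Ioi 0),
      (⨆ x, phiRel (-ε) (W x) (Wb x)) / ε < R ∧ ε ∈ Set.Ioi (0:ℝ) :=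
    (hphi.eventually (gt_mem_nhds hDR)).and self_mem_nhdsWithin
  obtain ⟨ε, hεR, hε⟩ := hev.exists
  rw [Set.mem_Ioi] at hε
  have h1 : (0:ℝ) < 1 + ε := by linarith
  set Φ : ℝ := ⨆ x, phiRel (-ε) (W x) (Wb x) with hΦdef
  have hΦR : Φ < ε * R := by
    have := (div_lt_iff₀ hε).1 hεR
    linarith
  -- notation
  have hαnn : ∀ n : ℕ, 0 ≤ ∑ h : Fin n → X × Y, Qdist W (strats n) n h * (1 - f n h) :=
    fun n => Finset.sum_nonneg fun h _ =>
      mul_nonneg (Qdist_nonneg_s14 (hsnn n) (fun x y => (hWpos x y).le) n h) (hg0 n h)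
  have hβnn : ∀ n : ℕ, 0 ≤ ∑ h : Fin n → X × Y, Qdist Wb (strats n) n h * (1 - f n h) :=
    fun n => Finset.sum_nonneg fun h _ =>
      mul_nonneg (Qdist_nonneg_s14 (hsnn n) (fun x y => (hWbpos x y).le) n h) (hg0 n h)
  have hβ1 : ∀ n : ℕ, (∑ h : Fin n → X × Y, Qdist Wb (strats n) n h * (1 - f n h)) ≤ 1 := by
    intro n
    calc ∑ h : Fin n → X × Y, Qdist Wb (strats n) n h * (1 - f n h)
        ≤ ∑ h : Fin n → X × Y, Qdist Wb (strats n) n h :=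
          Finset.sum_le_sum fun h _ => mul_le_of_le_one_right
            (Qdist_nonneg_s14 (hsnn n) (fun x y => (hWbpos x y).le) n h) (hg1 n h)
      _ ≤ 1 ^ n := sum_Qdist_le (fun x y => (hWbpos x y).le) (hstrats n) zero_le_one
            (fun x => le_of_eq (hWb x).2) n
      _ = 1 := one_pow n
  -- eventual bound on the Wb error
  have hβev : ∀ᶠ n in atTop,
      (∑ h : Fin n → X × Y, Qdist Wb (strats n) n h * (1 - f n h)) ≤
        Real.exp (-((n:ℝ) * R)) := by
    have hu0 : ∀ n : ℕ, 0 ≤ (-1 / (n : ℝ)) *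
        Real.log (∑ h : Fin n → X × Y, Qdist Wb (strats n) n h * (1 - f n h)) := by
      intro n
      have heq : (-1 / (n : ℝ)) *
          Real.log (∑ h : Fin n → X × Y, Qdist Wb (strats n) n h * (1 - f n h)) =
          (1 / (n : ℝ)) *
          (-(Real.log (∑ h : Fin n → X × Y, Qdist Wb (strats n) n h * (1 - f n h)))) := by
        ring
      rw [heq]
      exact mul_nonneg (by positivity)
        (neg_nonneg.2 (Real.log_nonpos (hβnn n) (hβ1 n)))
    rw [Filter.liminf_eq] at hRlt
    have hSne : Set.Nonempty {a : ℝ | ∀ᶠ n : ℕ in atTop, a ≤ (-1 / (n : ℝ)) *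
        Real.log (∑ h : Fin n → X × Y, Qdist Wb (strats n) n h * (1 - f n h))} :=
      ⟨0, Filter.Eventually.of_forall hu0⟩
    obtain ⟨a, ha, hRa⟩ := exists_lt_of_lt_csSup hSne hRlt
    have ha' : ∀ᶠ n : ℕ in atTop, a ≤ (-1 / (n : ℝ)) *
        Real.log (∑ h : Fin n → X × Y, Qdist Wb (strats n) n h * (1 - f n h)) := ha
    filter_upwards [ha', eventually_ge_atTop 1] with n han hn1
    have hnpos : (0:ℝ) < (n : ℝ) := by exact_mod_cast hn1
    by_cases hb0 : (∑ h : Fin n → X × Y, Qdist Wb (strats n) n h * (1 - f n h)) = 0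
    · rw [hb0]; exact (Real.exp_pos _).le
    · have hbpos : 0 < ∑ h : Fin n → X × Y, Qdist Wb (strats n) n h * (1 - f n h) :=
        lt_of_le_of_ne (hβnn n) (Ne.symm hb0)
      set L : ℝ := Real.log (∑ h : Fin n → X × Y, Qdist Wb (strats n) n h * (1 - f n h))
        with hL
      have hlt : R < (-1 / (n : ℝ)) * L := lt_of_lt_of_le hRa han
      have heq : (-1 / (n : ℝ)) * L = -(L / (n : ℝ)) := by ring
      rw [heq] at hlt
      have hLlt : L < -((n:ℝ) * R) := by
        have h2 : L / (n : ℝ) < -R := by linarith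
        have := (div_lt_iff₀ hnpos).1 h2
        linarith
      calc ∑ h : Fin n → X × Y, Qdist Wb (strats n) n h * (1 - f n h)
          = Real.exp L := (Real.exp_log hbpos).symm
        _ ≤ Real.exp (-((n:ℝ) * R)) := Real.exp_le_exp.2 hLlt.le
  -- key per-n inequality
  have key : ∀ n : ℕ,
      (∑ h : Fin n → X × Y, Qdist W (strats n) n h * (1 - f n h)) ≤
      (∑ h : Fin n → X × Y, Qdist Wb (strats n) n h * (1 - f n h)) ^ (ε / (1 + ε)) *
        Real.exp ((n : ℝ) * Φ / (1 + ε)) := by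
    intro n
    set V : X → Y → ℝ := fun x y => Wb x y ^ (-ε) * W x y ^ (1 + ε) with hVdef
    have hVnn : ∀ x y, 0 ≤ V x y := fun x y =>
      mul_nonneg (Real.rpow_nonneg (hWbpos x y).le _) (Real.rpow_nonneg (hWpos x y).le _)
    have hrow : ∀ x, ∑ y, V x y ≤ Real.exp Φ := by
      intro x
      have hpos : 0 < ∑ y, V x y :=
        Finset.sum_pos (fun y _ => mul_pos (Real.rpow_pos_of_pos (hWbpos x y) _)
          (Real.rpow_pos_of_pos (hWpos x y) _)) Finset.univ_nonempty
      have hlog : phiRel (-ε) (W x) (Wb x) = Real.log (∑ y, V x y) := by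
        unfold phiRel
        congr 1
        refine Finset.sum_congr rfl fun y _ => ?_
        rw [sub_neg_eq_add]
      have hsum : ∑ y, V x y = Real.exp (phiRel (-ε) (W x) (Wb x)) := by
        rw [hlog, Real.exp_log hpos]
      rw [hsum, hΦdef]
      exact Real.exp_le_exp.2 (le_ciSup (f := fun x => phiRel (-ε) (W x) (Wb x)) (Finite.bddAbove_range _) x)
    have hZ : ∑ h : Fin n → X × Y, Qdist V (strats n) n h ≤ Real.exp Φ ^ n :=
      sum_Qdist_le hVnn (hstrats n) (Real.exp_pos _).le hrow n
    have hpq : Real.HolderConjugate ((1 + ε) / ε) (1 + ε) := by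
      rw [Real.holderConjugate_iff]
      constructor
      · exact (one_lt_div hε).2 (by linarith)
      · rw [inv_div]
        field_simp
        ring
    set u : (Fin n → X × Y) → ℝ :=
      fun h => (Qdist Wb (strats n) n h * (1 - f n h)) ^ (ε / (1 + ε)) with hu
    set v : (Fin n → X × Y) → ℝ :=
      fun h => (Qdist V (strats n) n h * (1 - f n h)) ^ (1 / (1 + ε)) with hv
    have hunn : ∀ h, 0 ≤ u h := fun h => Real.rpow_nonneg
      (mul_nonneg (Qdist_nonneg_s14 (hsnn n) (fun x y => (hWbpos x y).le) n h) (hg0 n h)) _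
    have hvnn : ∀ h, 0 ≤ v h := fun h => Real.rpow_nonneg
      (mul_nonneg (Qdist_nonneg_s14 (hsnn n) hVnn n h) (hg0 n h)) _
    have hstep1 : (∑ h : Fin n → X × Y, Qdist W (strats n) n h * (1 - f n h)) ≤
        ∑ h : Fin n → X × Y, u h * v h := by
      refine Finset.sum_le_sum fun h _ => ?_
      rcases eq_or_lt_of_le (Qdist_nonneg_s14 (hsnn n) (fun x y => (hWbpos x y).le) n h)
        with hb0 | hbpos
      · have haz : Qdist W (strats n) n h = 0 := Qdist_eq_zero hWbpos hb0.symm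
        rw [haz, zero_mul]
        exact mul_nonneg (hunn h) (hvnn h)
      · rcases eq_or_lt_of_le (hg0 n h) with hgz | hgpos
        · rw [← hgz, mul_zero]
          exact mul_nonneg (hunn h) (hvnn h)
        · have hapos : 0 < Qdist W (strats n) n h := Qdist_pos (hsnn n) hWpos hbpos
          have hcid := Qdist_rpow (hsnn n) hWpos hWbpos hε n h
          exact le_of_eq (uv_eq hε hapos hbpos hgpos hcid)
    have hstep2 : (∑ h : Fin n → X × Y, u h * v h) ≤
        (∑ h : Fin n → X × Y, u h ^ ((1 + ε) / ε)) ^ (1 / ((1 + ε) / ε)) *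
        (∑ h : Fin n → X × Y, v h ^ (1 + ε)) ^ (1 / (1 + ε)) :=
      Real.inner_le_Lp_mul_Lq_of_nonneg Finset.univ hpq
        (fun h _ => hunn h) (fun h _ => hvnn h)
    have hup : (∑ h : Fin n → X × Y, u h ^ ((1 + ε) / ε)) =
        ∑ h : Fin n → X × Y, Qdist Wb (strats n) n h * (1 - f n h) := by
      refine Finset.sum_congr rfl fun h _ => ?_
      rw [hu, ← Real.rpow_mul
        (mul_nonneg (Qdist_nonneg_s14 (hsnn n) (fun x y => (hWbpos x y).le) n h) (hg0 n h))]
      rw [show (ε / (1 + ε)) * ((1 + ε) / ε) = 1 by field_simp, Real.rpow_one]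
    have hvq : (∑ h : Fin n → X × Y, v h ^ (1 + ε)) =
        ∑ h : Fin n → X × Y, Qdist V (strats n) n h * (1 - f n h) := by
      refine Finset.sum_congr rfl fun h _ => ?_
      rw [hv, ← Real.rpow_mul
        (mul_nonneg (Qdist_nonneg_s14 (hsnn n) hVnn n h) (hg0 n h))]
      rw [show (1 / (1 + ε)) * (1 + ε) = 1 by field_simp, Real.rpow_one]
    have hvZ : (∑ h : Fin n → X × Y, Qdist V (strats n) n h * (1 - f n h)) ≤
        Real.exp Φ ^ n := by
      refine le_trans (Finset.sum_le_sum fun h _ => ?_) hZ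
      exact mul_le_of_le_one_right (Qdist_nonneg_s14 (hsnn n) hVnn n h) (hg1 n h)
    have h1p : 1 / ((1 + ε) / ε) = ε / (1 + ε) := one_div_div _ _
    have hlast : ((∑ h : Fin n → X × Y, Qdist V (strats n) n h * (1 - f n h)) ^ (1 / (1 + ε)))
        ≤ Real.exp ((n : ℝ) * Φ / (1 + ε)) := by
      calc ((∑ h : Fin n → X × Y, Qdist V (strats n) n h * (1 - f n h)) ^ (1 / (1 + ε)))
          ≤ (Real.exp Φ ^ n) ^ (1 / (1 + ε)) :=
            Real.rpow_le_rpow (Finset.sum_nonneg fun h _ =>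
              mul_nonneg (Qdist_nonneg_s14 (hsnn n) hVnn n h) (hg0 n h)) hvZ (by positivity)
        _ = Real.exp ((n : ℝ) * Φ / (1 + ε)) := by
            rw [← Real.exp_nat_mul, ← Real.exp_mul, mul_one_div]
    calc (∑ h : Fin n → X × Y, Qdist W (strats n) n h * (1 - f n h))
        ≤ ∑ h : Fin n → X × Y, u h * v h := hstep1
      _ ≤ (∑ h : Fin n → X × Y, u h ^ ((1 + ε) / ε)) ^ (1 / ((1 + ε) / ε)) *
          (∑ h : Fin n → X × Y, v h ^ (1 + ε)) ^ (1 / (1 + ε)) := hstep2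
      _ = (∑ h : Fin n → X × Y, Qdist Wb (strats n) n h * (1 - f n h)) ^ (ε / (1 + ε)) *
          ((∑ h : Fin n → X × Y, Qdist V (strats n) n h * (1 - f n h)) ^ (1 / (1 + ε))) := by
            rw [hup, hvq, h1p]
      _ ≤ (∑ h : Fin n → X × Y, Qdist Wb (strats n) n h * (1 - f n h)) ^ (ε / (1 + ε)) *
          Real.exp ((n : ℝ) * Φ / (1 + ε)) :=
            mul_le_mul_of_nonneg_left hlast (Real.rpow_nonneg (hβnn n) _)
  -- conclude
  set c : ℝ := (ε * R - Φ) / (1 + ε) with hcdef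
  have hcpos : 0 < c := div_pos (by linarith) h1
  have hbound : ∀ᶠ n in atTop,
      (∑ h : Fin n → X × Y, Qdist W (strats n) n h * (1 - f n h)) ≤
        Real.exp (-(c * (n : ℝ))) := by
    filter_upwards [hβev] with n hβn
    calc (∑ h : Fin n → X × Y, Qdist W (strats n) n h * (1 - f n h))
        ≤ (∑ h : Fin n → X × Y, Qdist Wb (strats n) n h * (1 - f n h)) ^ (ε / (1 + ε)) *
          Real.exp ((n : ℝ) * Φ / (1 + ε)) := key n
      _ ≤ (Real.exp (-((n:ℝ) * R))) ^ (ε / (1 + ε)) * Real.exp ((n : ℝ) * Φ / (1 + ε)) :=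
          mul_le_mul_of_nonneg_right
            (Real.rpow_le_rpow (hβnn n) hβn (by positivity)) (Real.exp_pos _).le
      _ = Real.exp (-(c * (n : ℝ))) := by
          rw [← Real.exp_mul, ← Real.exp_add]
          congr 1
          rw [hcdef]
          field_simp
          ring
  have htend : Tendsto (fun n : ℕ => Real.exp (-(c * (n : ℝ)))) atTop (nhds 0) := by
    have h2 : Tendsto (fun n : ℕ => c * (n : ℝ)) atTop atTop :=
      Tendsto.const_mul_atTop hcpos tendsto_natCast_atTop_atTop
    exact Real.tendsto_exp_atBot.comp (tendsto_neg_atTop_atBot.comp h2)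
  exact tendsto_of_tendsto_of_tendsto_of_le_of_le' tendsto_const_nhds htend
    (Filter.Eventually.of_forall hαnn) hbound
end
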